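/- Let d ≥ 5 and let Ĝ₀(ξ) = 1/(2d - 2Σ_{j=1}^d cos 2πξ_j) on 𝕋^d. For any multi-index exponent β with |β|₁ < d-2 and any p ≥ 1 satisfying p(2 + |β|₁) < d, the (possibly fractional) derivative ∂^β Ĝ₀ belongs to L^p(𝕋^d). -/

import Mathlib

open MeasureTheory
open scoped ENNReal NNReal

/-- The Fourier symbol `Ĝ₀(ξ) = 1 / (2d - 2 Σ_j cos 2πξ_j)` of `(-Δ)⁻¹` on `ℤ^d`. -/
noncomputable def G0hat (d : ℕ) (ξ : Fin d → ℝ) : ℝ :=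
  1 / (2 * d - 2 * ∑ j, Real.cos (2 * Real.pi * ξ j))

/-- Partial derivative in the `i`-th coordinate direction. -/
noncomputable def pderiv' {d : ℕ} (i : Fin d) (f : (Fin d → ℝ) → ℝ) : (Fin d → ℝ) → ℝ :=
  fun x => fderiv ℝ f x (Pi.single i 1)

/-- Iterated partial derivative `∂^β` for a multi-index `β : Fin d → ℕ`. -/
noncomputable def pderivMulti {d : ℕ} (β : Fin d → ℕ) (f : (Fin d → ℝ) → ℝ) :
    (Fin d → ℝ) → ℝ :=
  (List.finRange d).foldr (fun i g => (pderiv' i)^[β i] g) f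

namespace S15
noncomputable def DD (d : ℕ) (ξ : Fin d → ℝ) : ℝ :=
  2 * d - 2 * ∑ j, Real.cos (2 * Real.pi * ξ j)
inductive E (d : ℕ) where
  | const : ℝ → E d
  | sinj : Fin d → E d
  | cosj : Fin d → E d
  | invD : E d
  | add : E d → E d → E d
  | mul : E d → E d → E d
variable {d : ℕ}
noncomputable def ev : E d → (Fin d → ℝ) → ℝ
  | .const c, _ => c
  | .sinj j, ξ => Real.sin (2 * Real.pi * ξ j)
  | .cosj j, ξ => Real.cos (2 * Real.pi * ξ j)
  | .invD, ξ => 1 / DD d ξ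
  | .add e f, ξ => ev e ξ + ev f ξ
  | .mul e f, ξ => ev e ξ * ev f ξ
noncomputable def der (i : Fin d) : E d → E d
  | .const _ => .const 0
  | .sinj j => if i = j then .mul (.const (2 * Real.pi)) (.cosj j) else .const 0
  | .cosj j => if i = j then .mul (.const (-(2 * Real.pi))) (.sinj j) else .const 0
  | .invD => .mul (.mul (.const (-(4 * Real.pi))) (.sinj i)) (.mul .invD .invD)
  | .add e f => .add (der i e) (der i f)
  | .mul e f => .add (.mul (der i e) f) (.mul e (der i f))

lemma hasFDerivAt_DD (x : Fin d → ℝ) :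
    ∃ L : (Fin d → ℝ) →L[ℝ] ℝ, HasFDerivAt (DD d) L x ∧
      ∀ i, L (Pi.single i 1) = 4 * Real.pi * Real.sin (2 * Real.pi * x i) := by
  have hterm : ∀ j : Fin d, HasFDerivAt (fun ξ : Fin d → ℝ => Real.cos (2 * Real.pi * ξ j))
      ((-Real.sin (2 * Real.pi * x j)) • ((2 * Real.pi) • (ContinuousLinearMap.proj j : (Fin d → ℝ) →L[ℝ] ℝ))) x := by
    intro j
    have h1 : HasFDerivAt (fun ξ : Fin d → ℝ => ξ j)
        (ContinuousLinearMap.proj (R := ℝ) (φ := fun _ : Fin d => ℝ) j) x :=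
      (ContinuousLinearMap.proj (R := ℝ) (φ := fun _ : Fin d => ℝ) j).hasFDerivAt
    have h2 := h1.const_mul (2 * Real.pi)
    have h3 : HasDerivAt Real.cos (-Real.sin (2 * Real.pi * x j)) (2 * Real.pi * x j) :=
      Real.hasDerivAt_cos _
    exact h3.comp_hasFDerivAt x h2
  refine ⟨_, ((hasFDerivAt_const (2 * (d:ℝ)) x).sub
      ((HasFDerivAt.fun_sum (fun j _ => hterm j)).const_mul 2)), ?_⟩
  intro i
  simp only [ContinuousLinearMap.sub_apply, ContinuousLinearMap.zero_apply,
    ContinuousLinearMap.smul_apply, ContinuousLinearMap.sum_apply,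
    ContinuousLinearMap.proj_apply, smul_eq_mul]
  rw [Finset.sum_eq_single i]
  · simp [Pi.single_apply]; ring
  · intro j _ hj
    simp [Pi.single_apply, hj]
  · simp

lemma trig_hasFDerivAt (j : Fin d) (x : Fin d → ℝ) (g : ℝ → ℝ) (g' : ℝ)
    (hg : HasDerivAt g g' (2 * Real.pi * x j)) :
    ∃ L : (Fin d → ℝ) →L[ℝ] ℝ,
      HasFDerivAt (fun ξ : Fin d → ℝ => g (2 * Real.pi * ξ j)) L x ∧
      ∀ i, L (Pi.single i 1) = if i = j then 2 * Real.pi * g' else 0 := by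
  have h1 : HasFDerivAt (fun ξ : Fin d → ℝ => ξ j)
      (ContinuousLinearMap.proj (R := ℝ) (φ := fun _ : Fin d => ℝ) j) x :=
    (ContinuousLinearMap.proj (R := ℝ) (φ := fun _ : Fin d => ℝ) j).hasFDerivAt
  have h2 := h1.const_mul (2 * Real.pi)
  refine ⟨_, hg.comp_hasFDerivAt x h2, ?_⟩
  intro i
  rcases eq_or_ne i j with h | h
  · subst h
    simp only [ContinuousLinearMap.smul_apply, ContinuousLinearMap.proj_apply, smul_eq_mul,
      Pi.single_eq_same, if_pos rfl]
    simp only [if_true]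
    ring
  · simp [Pi.single_apply, h, Ne.symm h]

lemma ev_hasFDerivAt (e : E d) (x : Fin d → ℝ) (hx : DD d x ≠ 0) :
    ∃ L : (Fin d → ℝ) →L[ℝ] ℝ, HasFDerivAt (ev e) L x ∧
      ∀ i, L (Pi.single i 1) = ev (der i e) x := by
  induction e with
  | const c =>
      exact ⟨0, hasFDerivAt_const c x, fun i => by simp [ev, der]⟩
  | sinj j =>
      obtain ⟨L, hL, hLi⟩ := trig_hasFDerivAt j x Real.sin (Real.cos (2 * Real.pi * x j))
        (Real.hasDerivAt_sin _)
      refine ⟨L, hL, fun i => ?_⟩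
      rw [hLi i]
      by_cases h : i = j <;> simp [der, ev, h]
  | cosj j =>
      obtain ⟨L, hL, hLi⟩ := trig_hasFDerivAt j x Real.cos (-Real.sin (2 * Real.pi * x j))
        (Real.hasDerivAt_cos _)
      refine ⟨L, hL, fun i => ?_⟩
      rw [hLi i]
      by_cases h : i = j <;> simp [der, ev, h] <;> ring
  | invD =>
      obtain ⟨L, hL, hLi⟩ := hasFDerivAt_DD x
      have h2 : HasFDerivAt (fun ξ => (DD d ξ)⁻¹) ((-(DD d x ^ 2)⁻¹) • L) x :=
        (hasDerivAt_inv hx).comp_hasFDerivAt x hL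
      have h3 : HasFDerivAt (ev (E.invD : E d)) (-(DD d x ^ 2)⁻¹ • L) x := by
        have : (fun ξ => (DD d ξ)⁻¹) = ev (E.invD : E d) := by
          funext ξ; simp [ev, one_div]
        rwa [this] at h2
      refine ⟨_, h3, fun i => ?_⟩
      simp only [ContinuousLinearMap.smul_apply, smul_eq_mul, hLi i, der, ev]
      field_simp
  | add e f he hf =>
      obtain ⟨L1, hL1, h1⟩ := he
      obtain ⟨L2, hL2, h2⟩ := hf
      exact ⟨L1 + L2, hL1.add hL2, fun i => by
        simp [ContinuousLinearMap.add_apply, h1 i, h2 i, der, ev]⟩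
  | mul e f he hf =>
      obtain ⟨L1, hL1, h1⟩ := he
      obtain ⟨L2, hL2, h2⟩ := hf
      refine ⟨_, hL1.mul hL2, fun i => ?_⟩
      simp only [ContinuousLinearMap.add_apply, ContinuousLinearMap.smul_apply, smul_eq_mul,
        h1 i, h2 i, der, ev]
      ring


def W : E d → ℤ
  | .const _ => 0
  | .sinj _ => -1
  | .cosj _ => 0
  | .invD => 2
  | .add e f => max (W e) (W f)
  | .mul e f => W e + W f

lemma continuous_DD : Continuous (DD d) := by
  unfold DD; fun_prop

lemma measurable_ev (e : E d) : Measurable (ev e) := by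
  induction e with
  | const c => exact measurable_const
  | sinj j => exact (Real.continuous_sin.comp (by fun_prop)).measurable
  | cosj j => exact (Real.continuous_cos.comp (by fun_prop)).measurable
  | invD =>
      simp only [ev, one_div]
      exact continuous_DD.measurable.inv
  | add e f he hf => exact he.add hf
  | mul e f he hf => exact he.mul hf

/-- agreement off the singular set -/
def Agrees (g : (Fin d → ℝ) → ℝ) (e : E d) : Prop :=
  ∀ x, DD d x ≠ 0 → g x = ev e x

lemma isOpen_good : IsOpen {x : Fin d → ℝ | DD d x ≠ 0} :=
  isOpen_compl_iff.mpr (isClosed_eq continuous_DD continuous_const)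

lemma Agrees.pderiv {g : (Fin d → ℝ) → ℝ} {e : E d} (h : Agrees g e) (i : Fin d) :
    Agrees (pderiv' i g) (der i e) := by
  intro x hx
  have hev : g =ᶠ[nhds x] ev e :=
    Filter.eventually_of_mem (isOpen_good.mem_nhds hx) (fun y hy => h y hy)
  obtain ⟨L, hL, hLi⟩ := ev_hasFDerivAt e x hx
  rw [pderiv', hev.fderiv_eq, hL.fderiv, hLi i]

lemma Agrees.pderiv_iter {g : (Fin d → ℝ) → ℝ} {e : E d} (h : Agrees g e) (i : Fin d) (n : ℕ) :
    Agrees ((pderiv' i)^[n] g) ((der i)^[n] e) := by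
  induction n with
  | zero => exact h
  | succ n ih =>
      rw [Function.iterate_succ_apply', Function.iterate_succ_apply']
      exact ih.pderiv i

lemma Agrees.foldr {g : (Fin d → ℝ) → ℝ} {e : E d} (β : Fin d → ℕ) (h : Agrees g e)
    (l : List (Fin d)) :
    Agrees (l.foldr (fun i g => (pderiv' i)^[β i] g) g)
      (l.foldr (fun i e => (der i)^[β i] e) e) := by
  induction l with
  | nil => exact h
  | cons i l ih => exact ih.pderiv_iter i (β i)

/-- the symbolic iterated derivative -/
noncomputable def symM (β : Fin d → ℕ) : E d :=
  (List.finRange d).foldr (fun i e => (der i)^[β i] e) E.invD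

lemma agrees_main (β : Fin d → ℕ) : Agrees (pderivMulti β (G0hat d)) (symM β) := by
  have h0 : Agrees (G0hat d) (E.invD : E d) := fun x _ => rfl
  exact h0.foldr β (List.finRange d)

lemma W_der (i : Fin d) (e : E d) : W (der i e) ≤ W e + 1 := by
  induction e with
  | const c => simp [der, W]
  | sinj j =>
      by_cases h : i = j <;> simp [der, W, h]
  | cosj j =>
      by_cases h : i = j <;> simp [der, W, h]
  | invD => simp [der, W]
  | add e f he hf =>
      simp only [der, W]
      omega
  | mul e f he hf =>
      simp only [der, W]
      omega

lemma W_der_iter (i : Fin d) (n : ℕ) (e : E d) : W ((der i)^[n] e) ≤ W e + n := by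
  induction n with
  | zero => simp
  | succ n ih =>
      rw [Function.iterate_succ_apply']
      have := W_der i ((der i)^[n] e)
      omega

lemma W_foldr (β : Fin d → ℕ) (e : E d) (l : List (Fin d)) :
    W (l.foldr (fun i e => (der i)^[β i] e) e) ≤ W e + (l.map β).sum := by
  induction l with
  | nil => simp
  | cons i l ih =>
      simp only [List.foldr_cons, List.map_cons, List.sum_cons]
      have := W_der_iter i (β i) (l.foldr (fun i e => (der i)^[β i] e) e)
      omega

lemma W_symM (β : Fin d → ℕ) : W (symM β) ≤ 2 + (∑ i, β i : ℕ) := by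
  have h := W_foldr β (E.invD : E d) (List.finRange d)
  have h2 : ((List.finRange d).map β).sum = ∑ i, β i := by
    rw [Fin.sum_univ_def]
  simp only [W] at h
  rw [h2] at h
  unfold symM
  omega



lemma DD_eq (ξ : Fin d → ℝ) : DD d ξ = 4 * ∑ j, Real.sin (Real.pi * ξ j) ^ 2 := by
  unfold DD
  have h : ∀ j : Fin d, Real.cos (2 * Real.pi * ξ j) = 1 - 2 * Real.sin (Real.pi * ξ j) ^ 2 := by
    intro j
    have h0 := Real.sin_sq_eq_half_sub (Real.pi * ξ j)
    have h2 : 2 * (Real.pi * ξ j) = 2 * Real.pi * ξ j := by ring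
    rw [h2] at h0
    linarith
  rw [Finset.sum_congr rfl (fun j _ => h j), Finset.sum_sub_distrib, Finset.sum_const,
    Finset.card_univ, Fintype.card_fin, ← Finset.mul_sum]
  push_cast
  ring

lemma DD_nonneg (ξ : Fin d → ℝ) : 0 ≤ DD d ξ := by
  rw [DD_eq]
  positivity

lemma DD_le (ξ : Fin d → ℝ) : DD d ξ ≤ 4 * d := by
  rw [DD_eq]
  have : ∑ j, Real.sin (Real.pi * ξ j) ^ 2 ≤ ∑ _j : Fin d, (1:ℝ) := by
    apply Finset.sum_le_sum
    intro j _
    nlinarith [Real.sin_sq_le_one (Real.pi * ξ j)]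
  simp only [Finset.sum_const, Finset.card_univ, Fintype.card_fin, nsmul_eq_mul, mul_one] at this
  nlinarith

lemma sin_pi_sq_le_DD (ξ : Fin d → ℝ) (j : Fin d) :
    4 * Real.sin (Real.pi * ξ j) ^ 2 ≤ DD d ξ := by
  rw [DD_eq]
  have : Real.sin (Real.pi * ξ j) ^ 2 ≤ ∑ k, Real.sin (Real.pi * ξ k) ^ 2 :=
    Finset.single_le_sum (f := fun k => Real.sin (Real.pi * ξ k) ^ 2)
      (fun k _ => sq_nonneg _) (Finset.mem_univ j)
  nlinarith

lemma sin_two_pi_sq_le_DD (ξ : Fin d → ℝ) (j : Fin d) :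
    Real.sin (2 * Real.pi * ξ j) ^ 2 ≤ DD d ξ := by
  have h1 : Real.sin (2 * Real.pi * ξ j) = 2 * Real.sin (Real.pi * ξ j) * Real.cos (Real.pi * ξ j) := by
    have := Real.sin_two_mul (Real.pi * ξ j)
    rw [show 2 * (Real.pi * ξ j) = 2 * Real.pi * ξ j by ring] at this
    exact this
  have h2 := Real.cos_sq_le_one (Real.pi * ξ j)
  have h3 := sin_pi_sq_le_DD ξ j
  rw [h1]
  nlinarith [mul_nonneg (sq_nonneg (Real.sin (Real.pi * ξ j))) (sub_nonneg.mpr h2)]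

/-- weight monotonicity for the bound -/
lemma rpow_weight_mono {w w' : ℤ} (h : w ≤ w') (ξ : Fin d → ℝ) (hD : 0 < DD d ξ) :
    DD d ξ ^ (-(w : ℝ) / 2) ≤ (4 * d) ^ (((w' : ℝ) - w) / 2) * DD d ξ ^ (-(w' : ℝ) / 2) := by
  have h1 : (-(w : ℝ) / 2) = ((w' : ℝ) - w) / 2 + (-(w' : ℝ) / 2) := by ring
  rw [h1, Real.rpow_add hD]
  have h2 : DD d ξ ^ (((w' : ℝ) - w) / 2) ≤ (4 * d) ^ (((w' : ℝ) - w) / 2) := by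
    apply Real.rpow_le_rpow (DD_nonneg ξ) (DD_le ξ)
    have : (w : ℝ) ≤ (w' : ℝ) := by exact_mod_cast h
    linarith
  have h3 : (0:ℝ) ≤ DD d ξ ^ (-(w' : ℝ) / 2) := Real.rpow_nonneg hD.le _
  nlinarith [Real.rpow_nonneg (DD_nonneg ξ) (((w' : ℝ) - w) / 2)]

lemma ev_bound (e : E d) : ∃ C : ℝ, 0 ≤ C ∧ ∀ ξ, 0 < DD d ξ →
    |ev e ξ| ≤ C * DD d ξ ^ (-(W e : ℝ) / 2) := by
  induction e with
  | const c =>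
      refine ⟨|c|, abs_nonneg c, fun ξ hD => ?_⟩
      simp [ev, W]
  | sinj j =>
      refine ⟨1, zero_le_one, fun ξ hD => ?_⟩
      have h1 := sin_two_pi_sq_le_DD ξ j
      have h2 : |ev (E.sinj j) ξ| ≤ Real.sqrt (DD d ξ) := by
        rw [show (ev (E.sinj j) ξ) = Real.sin (2 * Real.pi * ξ j) from rfl]
        rw [← Real.sqrt_sq_eq_abs]
        exact Real.sqrt_le_sqrt h1
      have h3 : Real.sqrt (DD d ξ) = DD d ξ ^ (-((W (E.sinj j : E d)) : ℝ) / 2) := by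
        rw [show (W (E.sinj j : E d)) = (-1 : ℤ) from rfl]
        rw [Real.sqrt_eq_rpow]
        norm_num
      rw [one_mul, ← h3]
      exact h2
  | cosj j =>
      refine ⟨1, zero_le_one, fun ξ hD => ?_⟩
      have : |ev (E.cosj j) ξ| ≤ 1 := Real.abs_cos_le_one _
      have h0 : (-(W (E.cosj j : E d) : ℝ) / 2) = 0 := by
        rw [show (W (E.cosj j : E d)) = (0 : ℤ) from rfl]; norm_num
      rw [h0, Real.rpow_zero]
      linarith
  | invD =>
      refine ⟨1, zero_le_one, fun ξ hD => ?_⟩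
      have h1 : ev (E.invD : E d) ξ = (DD d ξ)⁻¹ := by simp [ev, one_div]
      have h2 : (-(W (E.invD : E d) : ℝ) / 2) = -1 := by
        rw [show (W (E.invD : E d)) = (2 : ℤ) from rfl]; norm_num
      rw [h1, h2, Real.rpow_neg_one, one_mul, abs_of_pos (inv_pos.mpr hD)]
  | add e f he hf =>
      obtain ⟨C1, hC1, h1⟩ := he
      obtain ⟨C2, hC2, h2⟩ := hf
      have hWe : W e ≤ W (E.add e f) := le_max_left _ _
      have hWf : W f ≤ W (E.add e f) := le_max_right _ _
      refine ⟨C1 * (4 * d) ^ (((W (E.add e f) : ℝ) - W e) / 2)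
        + C2 * (4 * d) ^ (((W (E.add e f) : ℝ) - W f) / 2), by positivity, fun ξ hD => ?_⟩
      have b1 := rpow_weight_mono hWe ξ hD
      have b2 := rpow_weight_mono hWf ξ hD
      have := h1 ξ hD
      have := h2 ξ hD
      have habs : |ev (E.add e f) ξ| ≤ |ev e ξ| + |ev f ξ| := abs_add_le _ _
      nlinarith [Real.rpow_nonneg (DD_nonneg ξ) (-(W (E.add e f : E d) : ℝ) / 2)]
  | mul e f he hf =>
      obtain ⟨C1, hC1, h1⟩ := he
      obtain ⟨C2, hC2, h2⟩ := hf
      refine ⟨C1 * C2, by positivity, fun ξ hD => ?_⟩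
      have b1 := h1 ξ hD
      have b2 := h2 ξ hD
      have habs : |ev (E.mul e f) ξ| = |ev e ξ| * |ev f ξ| := abs_mul _ _
      have hsplit : DD d ξ ^ (-(W (E.mul e f : E d) : ℝ) / 2)
          = DD d ξ ^ (-(W e : ℝ) / 2) * DD d ξ ^ (-(W f : ℝ) / 2) := by
        rw [← Real.rpow_add hD]
        congr 1
        rw [show (W (E.mul e f : E d)) = W e + W f from rfl]
        push_cast
        ring
      rw [habs, hsplit]
      have := abs_nonneg (ev e ξ)
      have := abs_nonneg (ev f ξ)
      have := Real.rpow_nonneg (DD_nonneg ξ) (-(W e : ℝ) / 2)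
      have := Real.rpow_nonneg (DD_nonneg ξ) (-(W f : ℝ) / 2)
      nlinarith



/-- Jordan-type inequality on a coordinate. -/
lemma coord_bound {t : ℝ} (h0 : 0 ≤ t) (h1 : t ≤ 1) :
    2 * |t - (if t ≤ 1/2 then (0:ℝ) else 1)| ≤ Real.sin (Real.pi * t) := by
  have hπ := Real.pi_pos
  by_cases h : t ≤ 1/2
  · rw [if_pos h]
    have hj := Real.mul_le_sin (x := Real.pi * t) (by positivity) (by nlinarith)
    have h2 : 2 / Real.pi * (Real.pi * t) = 2 * t := by field_simp
    rw [h2] at hj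
    rw [sub_zero, abs_of_nonneg h0]
    linarith
  · rw [if_neg h]
    push_neg at h
    have hs : Real.sin (Real.pi * t) = Real.sin (Real.pi * (1 - t)) := by
      rw [show Real.pi * (1 - t) = Real.pi - Real.pi * t by ring, Real.sin_pi_sub]
    have hj := Real.mul_le_sin (x := Real.pi * (1 - t)) (by nlinarith) (by nlinarith)
    have h2 : 2 / Real.pi * (Real.pi * (1 - t)) = 2 * (1 - t) := by field_simp
    rw [h2] at hj
    rw [abs_of_nonpos (by linarith), hs]
    linarith

/-- The main pointwise bound on the iterated derivative. -/
lemma main_bound (β : Fin d → ℕ) : ∃ C : ℝ, 0 ≤ C ∧ ∀ ξ, 0 < DD d ξ →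
    |pderivMulti β (G0hat d) ξ| ≤ C * DD d ξ ^ (-(2 + (∑ i, β i : ℕ) : ℝ) / 2) := by
  obtain ⟨C0, hC0, hbound⟩ := ev_bound (symM β)
  set m : ℕ := ∑ i, β i with hm
  have hW : W (symM β) ≤ (2 + m : ℤ) := by have := W_symM β; omega
  refine ⟨C0 * (4 * d) ^ ((((2 + m : ℤ) : ℝ) - W (symM β)) / 2), by positivity, fun ξ hD => ?_⟩
  have hagree := agrees_main β ξ hD.ne'
  rw [hagree]
  have h1 := hbound ξ hD
  have h2 := rpow_weight_mono hW ξ hD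
  have h3 : ((((2 : ℤ) + m : ℤ)) : ℝ) = (2 + m : ℝ) := by push_cast; ring
  have h4 : -(((2 + m : ℤ)) : ℝ) / 2 = -(2 + (m:ℝ)) / 2 := by push_cast; ring
  rw [h4] at h2
  calc |ev (symM β) ξ| ≤ C0 * DD d ξ ^ (-(W (symM β) : ℝ) / 2) := h1
    _ ≤ C0 * ((4 * d) ^ ((((2 + m : ℤ) : ℝ) - (W (symM β) : ℝ)) / 2)
          * DD d ξ ^ (-(2 + (m:ℝ)) / 2)) :=
        mul_le_mul_of_nonneg_left h2 hC0
    _ = C0 * (4 * d) ^ ((((2 + m : ℤ) : ℝ) - (W (symM β) : ℝ)) / 2)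
          * DD d ξ ^ (-(2 + (m:ℝ)) / 2) := by ring

/-- Membership in ℒp from a pointwise power bound by an integrable function. -/
lemma memℒp_of_bound {X : Type*} [MeasurableSpace X] (μ : Measure X) (f g : X → ℝ)
    (p : ℝ) (hp : 0 < p) (hf : AEStronglyMeasurable f μ) (hg : Integrable g μ)
    (h : ∀ᵐ x ∂μ, |f x| ^ p ≤ g x) : MemLp f (ENNReal.ofReal p) μ := by
  refine ⟨hf, ?_⟩
  have hp0 : ENNReal.ofReal p ≠ 0 := by simp [ENNReal.ofReal_eq_zero, not_le, hp]
  rw [eLpNorm_eq_lintegral_rpow_enorm_toReal hp0 ENNReal.ofReal_ne_top]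
  refine ENNReal.rpow_lt_top_of_nonneg (by positivity) ?_
  have hkey : ∫⁻ x, ‖f x‖ₑ ^ (ENNReal.ofReal p).toReal ∂μ
      ≤ ∫⁻ x, ‖g x‖ₑ ∂μ := by
    rw [ENNReal.toReal_ofReal hp.le]
    apply lintegral_mono_ae
    filter_upwards [h] with x hx
    calc ‖f x‖ₑ ^ p = ENNReal.ofReal (|f x|) ^ p := by
          rw [Real.enorm_eq_ofReal_abs]
      _ = ENNReal.ofReal (|f x| ^ p) := ENNReal.ofReal_rpow_of_nonneg (abs_nonneg _) hp.le
      _ ≤ ENNReal.ofReal (g x) := ENNReal.ofReal_le_ofReal hx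
      _ ≤ ‖g x‖ₑ := Real.ofReal_le_enorm _
  exact hkey.trans_lt hg.2 |>.ne

/-- 1-d integrability of the singular factors. -/
lemma int1d {a : ℝ} (h0 : 0 < a) (h1 : a < 1) :
    IntegrableOn (fun t : ℝ => |t| ^ (-a) + |1 - t| ^ (-a)) (Set.Icc (0:ℝ) 1) := by
  have hr : (-1 : ℝ) < -a := by linarith
  have i1 : IntervalIntegrable (fun x : ℝ => x ^ (-a)) volume 0 1 :=
    intervalIntegral.intervalIntegrable_rpow' hr
  have i1' : IntegrableOn (fun x : ℝ => x ^ (-a)) (Set.Ioc (0:ℝ) 1) := by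
    rwa [intervalIntegrable_iff_integrableOn_Ioc_of_le zero_le_one] at i1
  have j1 : IntegrableOn (fun t : ℝ => |t| ^ (-a)) (Set.Icc (0:ℝ) 1) := by
    rw [integrableOn_Icc_iff_integrableOn_Ioc]
    apply i1'.congr_fun _ measurableSet_Ioc
    intro x hx
    obtain ⟨hx1, hx2⟩ := hx
    show x ^ (-a) = |x| ^ (-a)
    rw [abs_of_pos hx1]
  have i2 : IntervalIntegrable (fun x : ℝ => (1 - x) ^ (-a)) volume 0 1 := by
    have := i1.comp_sub_left 1
    simpa using this.symm
  have i2' : IntegrableOn (fun x : ℝ => (1 - x) ^ (-a)) (Set.Ioc (0:ℝ) 1) := by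
    rwa [intervalIntegrable_iff_integrableOn_Ioc_of_le zero_le_one] at i2
  have j2 : IntegrableOn (fun t : ℝ => |1 - t| ^ (-a)) (Set.Icc (0:ℝ) 1) := by
    rw [integrableOn_Icc_iff_integrableOn_Ioc]
    apply i2'.congr_fun _ measurableSet_Ioc
    intro x hx
    obtain ⟨hx1, hx2⟩ := hx
    show (1 - x) ^ (-a) = |1 - x| ^ (-a)
    rw [abs_of_nonneg (by linarith)]
  exact j1.add j2



lemma volume_pair_zero : (volume : Measure ℝ) ({0, 1} : Set ℝ) = 0 := by
  refine le_antisymm ?_ zero_le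
  rw [Set.insert_eq]
  calc volume ({(0:ℝ)} ∪ {1}) ≤ volume ({(0:ℝ)}) + volume ({(1:ℝ)}) := measure_union_le _ _
    _ = 0 := by simp [Real.volume_singleton]

lemma null_faces (hd : 0 < d) :
    (volume.restrict (Set.Icc (0 : Fin d → ℝ) 1)) {ξ | ¬ ∀ j, ξ j ≠ 0 ∧ ξ j ≠ 1} = 0 := by
  rw [Measure.restrict_apply' measurableSet_Icc]
  have hsub : {ξ : Fin d → ℝ | ¬ ∀ j, ξ j ≠ 0 ∧ ξ j ≠ 1} ∩ Set.Icc (0 : Fin d → ℝ) 1 ⊆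
      ⋃ j : Fin d, Set.pi Set.univ (fun k => if k = j then ({0, 1} : Set ℝ) else Set.Icc 0 1) := by
    rintro ξ ⟨hbad, hcube⟩
    simp only [Set.mem_setOf_eq, not_forall, not_and, ne_eq, not_not] at hbad
    rw [Set.mem_Icc] at hcube
    obtain ⟨j, hj⟩ := hbad
    refine Set.mem_iUnion.mpr ⟨j, ?_⟩
    intro k _
    by_cases hk : k = j
    · subst hk
      simp only [if_pos rfl, Set.mem_insert_iff, Set.mem_singleton_iff]
      by_cases h0 : ξ k = 0
      · exact Or.inl h0
      · exact Or.inr (hj h0)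
    · simp only [if_neg hk, Set.mem_Icc]
      exact ⟨hcube.1 k, hcube.2 k⟩
  refine measure_mono_null hsub (measure_iUnion_null fun j => ?_)
  rw [MeasureTheory.volume_pi_pi]
  apply Finset.prod_eq_zero (Finset.mem_univ j)
  rw [if_pos rfl]
  exact volume_pair_zero

end S15

set_option maxHeartbeats 2000000 in
theorem stmt15 (d : ℕ) (hd : 5 ≤ d) (β : Fin d → ℕ)
    (hβ : ((∑ i, β i : ℕ) : ℝ) < (d : ℝ) - 2)
    (p : ℝ) (hp : 1 ≤ p) (hpd : p * (2 + (∑ i, β i : ℕ)) < d) :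
    MeasureTheory.MemLp (pderivMulti β (G0hat d)) (ENNReal.ofReal p)
      (volume.restrict (Set.Icc (0 : Fin d → ℝ) 1)) := by
  classical
  set μr := volume.restrict (Set.Icc (0 : Fin d → ℝ) 1) with hμr
  set m : ℕ := ∑ i, β i with hm
  have hp0 : (0:ℝ) < p := by linarith
  have hd0 : (0:ℝ) < d := by
    have : (5:ℝ) ≤ d := by exact_mod_cast hd
    linarith
  have hd0' : 0 < d := by omega
  obtain ⟨C, hC, hbound⟩ := S15.main_bound β
  set aa : ℝ := (2 + (m:ℝ)) * p / d with haa
  have haa0 : 0 < aa := by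
    apply div_pos _ hd0
    have : (0:ℝ) ≤ m := Nat.cast_nonneg m
    nlinarith
  have haa1 : aa < 1 := by
    rw [haa, div_lt_one hd0]
    calc (2 + (m:ℝ)) * p = p * (2 + (m:ℝ)) := by ring
      _ < d := hpd
  set φ : ℝ → ℝ := (Set.Icc (0:ℝ) 1).indicator (fun t => |t| ^ (-aa) + |1 - t| ^ (-aa)) with hφdef
  have hφ : Integrable φ := (integrable_indicator_iff measurableSet_Icc).mpr (S15.int1d haa0 haa1)
  have hΦ : Integrable (fun ξ : Fin d → ℝ => ∏ j, φ (ξ j)) :=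
    Integrable.fintype_prod (fun _ => hφ)
  have hgood : ∀ᵐ ξ ∂μr, ∀ j, ξ j ≠ 0 ∧ ξ j ≠ 1 := by
    rw [MeasureTheory.ae_iff]
    exact S15.null_faces hd0'
  have hmem : ∀ᵐ ξ ∂μr, ξ ∈ Set.Icc (0 : Fin d → ℝ) 1 :=
    MeasureTheory.ae_restrict_mem measurableSet_Icc
  -- the key pointwise estimate at good points
  have key : ∀ ξ, ξ ∈ Set.Icc (0 : Fin d → ℝ) 1 → (∀ j, ξ j ≠ 0 ∧ ξ j ≠ 1) →
      0 < S15.DD d ξ ∧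
      |pderivMulti β (G0hat d) ξ| ^ p ≤ C ^ p * ∏ j, φ (ξ j) := by
    intro ξ hcube hgoodξ
    rw [Set.mem_Icc] at hcube
    have hcoord : ∀ j, 0 ≤ ξ j ∧ ξ j ≤ 1 := fun j => ⟨hcube.1 j, hcube.2 j⟩
    set c : Fin d → ℝ := fun j => if ξ j ≤ 1/2 then 0 else 1 with hc
    set r : Fin d → ℝ := fun j => |ξ j - c j| with hr
    have hr0 : ∀ j, 0 < r j := by
      intro j
      rw [hr]
      simp only
      by_cases h : ξ j ≤ 1/2
      · rw [hc]; simp only [if_pos h, sub_zero]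
        exact abs_pos.mpr (hgoodξ j).1
      · rw [hc]; simp only [if_neg h]
        exact abs_pos.mpr (sub_ne_zero.mpr (hgoodξ j).2)
    have h16 : ∀ j, 16 * r j ^ 2 ≤ S15.DD d ξ := by
      intro j
      have hj := S15.coord_bound (hcoord j).1 (hcoord j).2
      have hDj := S15.sin_pi_sq_le_DD ξ j
      have hrj : 2 * r j ≤ Real.sin (Real.pi * ξ j) := hj
      have hrn : 0 ≤ r j := (hr0 j).le
      nlinarith
    have hD : 0 < S15.DD d ξ := by
      have j0 : Fin d := ⟨0, hd0'⟩
      have := h16 j0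
      nlinarith [hr0 j0]
    refine ⟨hD, ?_⟩
    set E1 : ℝ := -(2 + (m:ℝ)) / 2 * p with hE1
    have hE1neg : E1 < 0 := by
      rw [hE1]
      have : (0:ℝ) ≤ m := Nat.cast_nonneg m
      nlinarith
    have hb := hbound ξ hD
    have step1 : |pderivMulti β (G0hat d) ξ| ^ p
        ≤ C ^ p * S15.DD d ξ ^ E1 := by
      calc |pderivMulti β (G0hat d) ξ| ^ p
          ≤ (C * S15.DD d ξ ^ (-(2 + (m:ℝ)) / 2)) ^ p :=
            Real.rpow_le_rpow (abs_nonneg _) hb hp0.le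
        _ = C ^ p * (S15.DD d ξ ^ (-(2 + (m:ℝ)) / 2)) ^ p :=
            Real.mul_rpow hC (Real.rpow_nonneg (S15.DD_nonneg ξ) _)
        _ = C ^ p * S15.DD d ξ ^ E1 := by
            rw [← Real.rpow_mul (S15.DD_nonneg ξ), hE1]
    -- now: DD ^ E1 ≤ ∏ φ (ξ j)
    have hprod : S15.DD d ξ ^ E1 ≤ ∏ j, φ (ξ j) := by
      have hPpos : (0:ℝ) < ∏ j, 16 * r j ^ 2 :=
        Finset.prod_pos (fun j _ => by nlinarith [hr0 j])
      have hPle : (∏ j, 16 * r j ^ 2) ≤ S15.DD d ξ ^ (d:ℝ) := by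
        rw [Real.rpow_natCast]
        calc (∏ j, 16 * r j ^ 2) ≤ ∏ _j : Fin d, S15.DD d ξ :=
              Finset.prod_le_prod (fun j _ => by nlinarith [hr0 j]) (fun j _ => h16 j)
          _ = S15.DD d ξ ^ d := by
              rw [Finset.prod_const, Finset.card_univ, Fintype.card_fin]
      have hEd : E1 / d ≤ 0 := by
        apply div_nonpos_of_nonpos_of_nonneg hE1neg.le hd0.le
      have hsplit : S15.DD d ξ ^ E1 = (S15.DD d ξ ^ (d:ℝ)) ^ (E1 / d) := by
        rw [← Real.rpow_mul (S15.DD_nonneg ξ)]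
        congr 1
        field_simp
      calc S15.DD d ξ ^ E1 = (S15.DD d ξ ^ (d:ℝ)) ^ (E1 / d) := hsplit
        _ ≤ (∏ j, 16 * r j ^ 2) ^ (E1 / d) :=
            Real.rpow_le_rpow_of_nonpos hPpos hPle hEd
        _ = ∏ j, (16 * r j ^ 2) ^ (E1 / d) :=
            (Real.finset_prod_rpow _ _ (fun j _ => by nlinarith [hr0 j]) _).symm
        _ ≤ ∏ j, φ (ξ j) := by
            apply Finset.prod_le_prod
            · intro j _
              exact Real.rpow_nonneg (by nlinarith [hr0 j]) _
            · intro j _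
              have hrpos := hr0 j
              have step_a : (16 * r j ^ 2) ^ (E1 / d) ≤ (r j ^ 2) ^ (E1 / d) :=
                Real.rpow_le_rpow_of_nonpos (by nlinarith) (by nlinarith) hEd
              have step_b : (r j ^ 2) ^ (E1 / d) = r j ^ (-aa) := by
                rw [← Real.rpow_natCast (r j) 2, ← Real.rpow_mul (hr0 j).le]
                congr 1
                rw [haa, hE1]
                push_cast
                field_simp
              have step_c : r j ^ (-aa) ≤ |ξ j| ^ (-aa) + |1 - ξ j| ^ (-aa) := by
                rw [hr, hc]
                simp only
                by_cases h : ξ j ≤ 1/2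
                · rw [if_pos h, sub_zero]
                  exact le_add_of_nonneg_right (Real.rpow_nonneg (abs_nonneg _) _)
                · rw [if_neg h, abs_sub_comm]
                  exact le_add_of_nonneg_left (Real.rpow_nonneg (abs_nonneg _) _)
              have hφval : φ (ξ j) = |ξ j| ^ (-aa) + |1 - ξ j| ^ (-aa) := by
                rw [hφdef]
                exact Set.indicator_of_mem (Set.mem_Icc.mpr (hcoord j)) _
              rw [hφval]
              exact step_a.trans (step_b.le.trans step_c)
    calc |pderivMulti β (G0hat d) ξ| ^ p ≤ C ^ p * S15.DD d ξ ^ E1 := step1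
      _ ≤ C ^ p * ∏ j, φ (ξ j) := by
          apply mul_le_mul_of_nonneg_left hprod (by positivity)
  -- measurability
  have heq : pderivMulti β (G0hat d) =ᵐ[μr] S15.ev (S15.symM β) := by
    filter_upwards [hgood, hmem] with ξ h1 h2
    exact S15.agrees_main β ξ (key ξ h2 h1).1.ne'
  have haesm : AEStronglyMeasurable (pderivMulti β (G0hat d)) μr :=
    ((S15.measurable_ev (S15.symM β)).aestronglyMeasurable).congr heq.symm
  -- conclude
  apply S15.memℒp_of_bound μr _ (fun ξ => C ^ p * ∏ j, φ (ξ j)) p hp0 haesm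
  · exact hΦ.restrict.const_mul (C ^ p)
  · filter_upwards [hgood, hmem] with ξ h1 h2
    exact (key ξ h2 h1).2
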